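/- Let H ∈ 𝔽₂^{m×n} be a parity-check matrix of a binary linear code C whose first m−1 rows all have Hamming weight exactly 2. Let Ĥ be the (m−1)×n matrix consisting of these rows, let R be the equivalence relation on the column index set I associated with Ĥ, and assume that the support I_m of the last row of H intersects each equivalence class of R in at most one element. Then d(C) = w_AWGNC^min(H) = w_BSC^min(H) = w_maxfrac^min(H). -/

import Mathlib

open Matrix BigOperators Finset

section Defs

variable {J I : Type*} [Fintype J] [Fintype I] [DecidableEq I]

/-- The support of row `j` of a binary matrix `H`. -/
def rowSupp (H : Matrix J I (ZMod 2)) (j : J) : Finset I :=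
  Finset.univ.filter fun i => H j i = 1

/-- The fundamental cone of a binary matrix `H`. -/
def fundCone (H : Matrix J I (ZMod 2)) : Set (I → ℝ) :=
  {x | (∀ i, 0 ≤ x i) ∧
    ∀ j : J, ∀ ℓ ∈ rowSupp H j, x ℓ ≤ ∑ i ∈ (rowSupp H j).erase ℓ, x i}

/-- BEC pseudoweight: size of the support. -/
noncomputable def wBEC (x : I → ℝ) : ℝ := ({i | x i ≠ 0}.ncard : ℝ)

/-- AWGNC pseudoweight. -/
noncomputable def wAWGNC (x : I → ℝ) : ℝ := (∑ i, x i) ^ 2 / ∑ i, x i ^ 2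

/-- Max-fractional weight. -/
noncomputable def wMaxFrac (x : I → ℝ) : ℝ := (∑ i, x i) / sSup (Set.range x)

/-- `H` is a parity-check matrix of the code `C`. -/
def IsParityCheck (H : Matrix J I (ZMod 2)) (C : Submodule (ZMod 2) (I → ZMod 2)) : Prop :=
  ∀ c, c ∈ C ↔ H.mulVec c = 0

/-- Minimum Hamming distance of a code. -/
noncomputable def minDist (C : Submodule (ZMod 2) (I → ZMod 2)) : ℕ :=
  sInf {d | ∃ c ∈ C, c ≠ 0 ∧ hammingNorm c = d}

/-- Minimum pseudoweight of `H` w.r.t. pseudoweight function `w`: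
the infimum of `w` over all nonzero pseudocodewords (`⊤` if there are none). -/
noncomputable def minPW (w : (I → ℝ) → ℝ) (H : Matrix J I (ZMod 2)) : EReal :=
  sInf ((fun x => (w x : EReal)) '' (fundCone H \ {0}))

/-- The chain (connectivity) relation associated with a binary matrix whose rows
have weight 2: `i` and `i'` are related iff they are equal or joined by a chain of rows
whose supports are exactly consecutive pairs. -/
def chainRel (H : Matrix J I (ZMod 2)) (i i' : I) : Prop :=
  i = i' ∨ ∃ ℓ : ℕ, 1 ≤ ℓ ∧ ∃ (c : Fin (ℓ + 1) → I) (r : Fin ℓ → J),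
    c 0 = i ∧ c (Fin.last ℓ) = i' ∧
    ∀ t : Fin ℓ, rowSupp H (r t) = {c t.castSucc, c t.succ}

/-- The 0-1 real matrix associated with a binary matrix. -/
def toRealMatrix (H : Matrix J I (ZMod 2)) : Matrix J I ℝ :=
  Matrix.of fun j i => if H j i = 1 then (1 : ℝ) else 0

/-- The Tanner graph of a binary matrix. -/
def tannerGraph (H : Matrix J I (ZMod 2)) : SimpleGraph (J ⊕ I) :=
  SimpleGraph.fromRel fun u v => ∃ j i, u = Sum.inl j ∧ v = Sum.inr i ∧ H j i = 1

end Defs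

/-- The multiset of (real) eigenvalues, with multiplicity, of a real square matrix:
the real roots of its characteristic polynomial. -/
noncomputable def eigMult {ι : Type*} [Fintype ι] [DecidableEq ι] (A : Matrix ι ι ℝ) :
    Multiset ℝ :=
  A.charpoly.roots

section FinDefs

variable {n : ℕ}

/-- The non-increasing rearrangement of a real vector. -/
noncomputable def sortDesc (x : Fin n → ℝ) : Fin n → ℝ :=
  fun i => x (Tuple.sort (fun j => -x j) i)

/-- `Φ(ξ) = ∫₀^ξ φ`, where `φ(ξ) = x'_i` for `i - 1 < ξ ≤ i` and `x'` is the
non-increasing rearrangement of `x`. -/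
noncomputable def bigPhi (x : Fin n → ℝ) (ξ : ℝ) : ℝ :=
  ∑ i : Fin n, sortDesc x i * min 1 (max 0 (ξ - (i : ℝ)))

/-- BSC pseudoweight: `2 Φ⁻¹(Φ(n)/2)`. -/
noncomputable def wBSC (x : Fin n → ℝ) : ℝ :=
  2 * sInf {ξ : ℝ | bigPhi x (n : ℝ) / 2 ≤ bigPhi x ξ}

/-- The pseudocodeword redundancy of a code `C` w.r.t. the pseudoweight function `w`:
the smallest number of rows of a parity-check matrix `H` of `C` whose minimum
pseudoweight equals the minimum distance of `C` (`⊤` if there is no such matrix). -/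
noncomputable def pcRedundancy (w : (Fin n → ℝ) → ℝ)
    (C : Submodule (ZMod 2) (Fin n → ZMod 2)) : ℕ∞ :=
  sInf {k : ℕ∞ | ∃ (m : ℕ) (H : Matrix (Fin m) (Fin n) (ZMod 2)),
    k = (m : ℕ∞) ∧ IsParityCheck H C ∧ minPW w H = ((minDist C : ℝ) : EReal)}

end FinDefs

namespace S7

def step {J I : Type*} [Fintype J] [Fintype I] [DecidableEq I]
    (Hh : Matrix J I (ZMod 2)) (i i' : I) : Prop :=
  ∃ j, rowSupp Hh j = {i, i'}

lemma step_symm {J I : Type*} [Fintype J] [Fintype I] [DecidableEq I]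
    (Hh : Matrix J I (ZMod 2)) : Symmetric (step Hh) := by
  rintro i i' ⟨j, hj⟩
  exact ⟨j, by rw [hj, Finset.pair_comm]⟩

lemma chainRel_iff {J I : Type*} [Fintype J] [Fintype I] [DecidableEq I]
    (Hh : Matrix J I (ZMod 2)) (a b : I) :
    chainRel Hh a b ↔ Relation.ReflTransGen (step Hh) a b := by
  constructor
  · rintro (rfl | ⟨ℓ, hℓ, c, r, h0, hl, hstep⟩)
    · exact Relation.ReflTransGen.refl
    · subst h0; subst hl
      have key : ∀ t : Fin (ℓ + 1), Relation.ReflTransGen (step Hh) (c 0) (c t) := by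
        intro t
        induction t using Fin.induction with
        | zero => exact Relation.ReflTransGen.refl
        | succ u ih => exact ih.tail ⟨r u, hstep u⟩
      exact key _
  · intro h
    induction h with
    | refl => exact Or.inl rfl
    | @tail b' b _ h2 ih =>
      obtain ⟨j, hj⟩ := h2
      rcases ih with rfl | ⟨ℓ, hℓ, c, r, h0, hl, hstep⟩
      · refine Or.inr ⟨1, le_refl _, ![a, b], ![j], rfl, rfl, ?_⟩
        intro t
        fin_cases t
        simpa using hj
      · refine Or.inr ⟨ℓ + 1, by omega, Fin.snoc c b, Fin.snoc r j, ?_, ?_, ?_⟩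
        · rw [show (0 : Fin (ℓ + 1 + 1)) = Fin.castSucc 0 by rfl, Fin.snoc_castSucc]
          exact h0
        · simp
        · intro t
          induction t using Fin.lastCases with
          | last =>
            simp only [Fin.snoc_castSucc, Fin.succ_last, Fin.snoc_last, hl]
            exact hj
          | cast u =>
            simp only [Fin.snoc_castSucc, Fin.succ_castSucc]
            exact hstep u

lemma zmod2_cases (a : ZMod 2) : a = 0 ∨ a = 1 := by revert a; decide

lemma mulVec_eq {J I : Type*} [Fintype J] [Fintype I] [DecidableEq I]
    (H : Matrix J I (ZMod 2)) (c : I → ZMod 2) (j : J) :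
    H.mulVec c j = ∑ i ∈ rowSupp H j, c i := by
  rw [rowSupp, Finset.sum_filter]
  refine Finset.sum_congr rfl fun i _ => ?_
  rcases zmod2_cases (H j i) with h | h <;> simp [h]

variable {m n : ℕ}

section Cone

variable {H : Matrix (Fin (m + 1)) (Fin n) (ZMod 2)}
  {Hh : Matrix (Fin m) (Fin n) (ZMod 2)}

lemma rowSupp_castSucc (hHh : Hh = Matrix.of fun j i => H j.castSucc i) (j : Fin m) :
    rowSupp H j.castSucc = rowSupp Hh j := by
  subst hHh; rfl

lemma pair_ne (hrows : ∀ j, (rowSupp Hh j).card = 2) {j : Fin m} {a b : Fin n}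
    (hj : rowSupp Hh j = {a, b}) : a ≠ b := by
  rintro rfl
  have := hrows j
  rw [hj] at this
  simp at this

lemma cone_step_eq (hHh : Hh = Matrix.of fun j i => H j.castSucc i)
    (hrows : ∀ j, (rowSupp Hh j).card = 2)
    {x : Fin n → ℝ} (hx : x ∈ fundCone H) {a b : Fin n} (h : step Hh a b) : x a = x b := by
  obtain ⟨j, hj⟩ := h
  have hab : a ≠ b := pair_ne hrows hj
  have hsupp : rowSupp H j.castSucc = {a, b} := by rw [rowSupp_castSucc hHh, hj]
  have h1 := hx.2 j.castSucc a (by rw [hsupp]; simp)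
  have h2 := hx.2 j.castSucc b (by rw [hsupp]; simp)
  rw [hsupp] at h1 h2
  have e1 : ({a, b} : Finset (Fin n)).erase a = {b} := by
    rw [show ({a, b} : Finset (Fin n)) = insert a {b} from rfl,
      Finset.erase_insert (by simpa using hab)]
  have e2 : ({a, b} : Finset (Fin n)).erase b = {a} := by
    rw [Finset.pair_comm, show ({b, a} : Finset (Fin n)) = insert b {a} from rfl,
      Finset.erase_insert (by simpa using hab.symm)]
  rw [e1, Finset.sum_singleton] at h1
  rw [e2, Finset.sum_singleton] at h2
  exact le_antisymm h1 h2

lemma cone_rel_eq (hHh : Hh = Matrix.of fun j i => H j.castSucc i)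
    (hrows : ∀ j, (rowSupp Hh j).card = 2)
    {x : Fin n → ℝ} (hx : x ∈ fundCone H) {a b : Fin n}
    (h : Relation.ReflTransGen (step Hh) a b) : x a = x b := by
  induction h with
  | refl => rfl
  | tail _ h2 ih => exact ih.trans (cone_step_eq hHh hrows hx h2)

/-- membership of an indicator codeword -/
lemma indicator_mem_code {C : Submodule (ZMod 2) (Fin n → ZMod 2)}
    (hH : IsParityCheck H C) (hHh : Hh = Matrix.of fun j i => H j.castSucc i)
    (hrows : ∀ j, (rowSupp Hh j).card = 2)
    (P : Fin n → Prop) [DecidablePred P]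
    (hinv : ∀ a b, step Hh a b → (P a ↔ P b))
    (hlastrow : ∑ i ∈ rowSupp H (Fin.last m), (if P i then (1 : ZMod 2) else 0) = 0) :
    (fun i => if P i then (1 : ZMod 2) else 0) ∈ C := by
  rw [hH]
  funext j
  rw [Pi.zero_apply, mulVec_eq]
  induction j using Fin.lastCases with
  | last => exact hlastrow
  | cast j' =>
    rw [rowSupp_castSucc hHh]
    obtain ⟨a, b, hab, hj⟩ := Finset.card_eq_two.1 (hrows j')
    rw [hj, Finset.sum_pair hab]
    have := hinv a b ⟨j', hj⟩
    by_cases h : P a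
    · simp only [h, this.1 h, if_true]; decide
    · have hb : ¬ P b := fun hb => h (this.2 hb)
      simp [h, hb]

lemma key_lb {C : Submodule (ZMod 2) (Fin n → ZMod 2)}
    (hH : IsParityCheck H C)
    (hHh : Hh = Matrix.of fun j i => H j.castSucc i)
    (hrows : ∀ j, (rowSupp Hh j).card = 2)
    (hlast : ∀ i ∈ rowSupp H (Fin.last m), ∀ i' ∈ rowSupp H (Fin.last m),
      chainRel Hh i i' → i = i')
    {x : Fin n → ℝ} (hx : x ∈ fundCone H) (hx0 : x ≠ 0) {p : Fin n}
    (hp : ∀ i, x i ≤ x p) :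
    (minDist C : ℝ) * x p ≤ ∑ i, x i := by
  classical
  set R := Relation.ReflTransGen (step Hh) with hR
  have Rsymm : ∀ {a b}, R a b → R b a :=
    fun {a b} h => by
      rw [hR] at h ⊢
      induction h with
      | refl => exact Relation.ReflTransGen.refl
      | tail _ hbc ih => exact Relation.ReflTransGen.head (step_symm Hh hbc) ih
  have Rconst : ∀ {a b}, R a b → x a = x b := fun h => cone_rel_eq hHh hrows hx h
  set S := rowSupp H (Fin.last m) with hSdef
  have hMpos : 0 < x p := by
    obtain ⟨i, hi⟩ := Function.ne_iff.1 hx0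
    exact lt_of_lt_of_le (lt_of_le_of_ne (hx.1 i) (Ne.symm hi)) (hp i)
  set F : Fin n → Finset (Fin n) := fun s => univ.filter (fun i => R i s) with hF
  have hFmem : ∀ s i, i ∈ F s ↔ R i s := by intro s i; simp [hF]
  have hFsum : ∀ s, ∑ i ∈ F s, x i = ((F s).card : ℝ) * x s := by
    intro s
    rw [Finset.sum_congr rfl (fun i hi => Rconst ((hFmem s i).1 hi)), Finset.sum_const,
      nsmul_eq_mul]
  have hFdisj : ∀ s ∈ S, ∀ r ∈ S, s ≠ r → Disjoint (F s) (F r) := by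
    intro s hs r hr hsr
    rw [Finset.disjoint_left]
    intro i his hir
    exact hsr (hlast s hs r hr ((chainRel_iff Hh s r).2
      ((Rsymm ((hFmem s i).1 his)).trans ((hFmem r i).1 hir))))
  have hDle : ∀ (Pr : Fin n → Prop) [DecidablePred Pr],
      (∀ a b, step Hh a b → (Pr a ↔ Pr b)) →
      (∑ i ∈ S, (if Pr i then (1 : ZMod 2) else 0)) = 0 → (∃ i0, Pr i0) →
      minDist C ≤ (univ.filter Pr).card := by
    intro Pr _ hinv hrow ⟨i0, hi0⟩
    have hmem := indicator_mem_code hH hHh hrows Pr hinv hrow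
    have hne : (fun i => if Pr i then (1 : ZMod 2) else 0) ≠ 0 := by
      intro hcontra
      have := congrFun hcontra i0
      simp [hi0] at this
    have : hammingNorm (fun i => if Pr i then (1 : ZMod 2) else 0) =
        (univ.filter Pr).card := by
      unfold hammingNorm
      congr 1
      apply Finset.filter_congr
      intro i _
      by_cases h : Pr i <;> simp [h]
    exact Nat.sInf_le ⟨_, hmem, hne, this⟩
  by_cases hcase : ∃ s ∈ S, R s p
  · -- class of p meets S at s
    obtain ⟨s, hs, hRs⟩ := hcase
    have hxs : x s = x p := Rconst hRs
    have hSe : (S.erase s).Nonempty := by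
      rw [Finset.nonempty_iff_ne_empty]
      intro hempty
      have h1 := hx.2 (Fin.last m) s hs
      rw [← hSdef, hempty, Finset.sum_empty] at h1
      rw [hxs] at h1
      exact absurd h1 (not_le.2 hMpos)
    obtain ⟨r, hr, hrmin⟩ := Finset.exists_min_image (S.erase s) (fun i => (F i).card) hSe
    have hrS : r ∈ S := Finset.mem_of_mem_erase hr
    have hrs : r ≠ s := Finset.ne_of_mem_erase hr
    set Pr : Fin n → Prop := fun i => R i s ∨ R i r with hPr
    have hinv : ∀ a b, step Hh a b → (Pr a ↔ Pr b) := by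
      intro a b hab
      have h1 : R a b := Relation.ReflTransGen.single hab
      have h2 : R b a := Rsymm h1
      constructor
      · rintro (h | h); exacts [Or.inl (h2.trans h), Or.inr (h2.trans h)]
      · rintro (h | h); exacts [Or.inl (h1.trans h), Or.inr (h1.trans h)]
    have hrow : (∑ i ∈ S, (if Pr i then (1 : ZMod 2) else 0)) = 0 := by
      rw [← Finset.add_sum_erase _ _ hs, ← Finset.add_sum_erase _ _ hr]
      have hz : ∑ i ∈ (S.erase s).erase r, (if Pr i then (1 : ZMod 2) else 0) = 0 := by
        apply Finset.sum_eq_zero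
        intro i hi
        have hiS : i ∈ S := Finset.mem_of_mem_erase (Finset.mem_of_mem_erase hi)
        have hine : i ≠ r := Finset.ne_of_mem_erase hi
        have hine' : i ≠ s := Finset.ne_of_mem_erase (Finset.mem_of_mem_erase hi)
        have : ¬ Pr i := by
          rintro (h | h)
          · exact hine' (hlast i hiS s hs ((chainRel_iff Hh i s).2 h))
          · exact hine (hlast i hiS r hrS ((chainRel_iff Hh i r).2 h))
        simp [this]
      rw [hz]
      have h1 : Pr s := Or.inl Relation.ReflTransGen.refl
      have h2 : Pr r := Or.inr Relation.ReflTransGen.refl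
      simp only [h1, h2, if_true]
      decide
    have hcard : (univ.filter Pr).card = (F s).card + (F r).card := by
      have huni : univ.filter Pr = F s ∪ F r := by
        ext i
        simp only [Finset.mem_filter, Finset.mem_univ, true_and, Finset.mem_union, hFmem]
        exact Iff.rfl
      rw [huni]
      exact Finset.card_union_of_disjoint (hFdisj s hs r hrS (Ne.symm hrs))
    have hd : (minDist C : ℝ) ≤ ((F s).card : ℝ) + ((F r).card : ℝ) := by
      have := hDle Pr hinv hrow ⟨s, Or.inl Relation.ReflTransGen.refl⟩
      rw [hcard] at this
      exact_mod_cast this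
    -- sum lower bound
    have hPD : (↑S : Set (Fin n)).PairwiseDisjoint F := by
      intro a ha b hb hab
      exact hFdisj a ha b hb hab
    have hsum1 : ∑ i ∈ S.biUnion F, x i ≤ ∑ i, x i :=
      Finset.sum_le_sum_of_subset_of_nonneg (Finset.subset_univ _)
        (fun i _ _ => hx.1 i)
    rw [Finset.sum_biUnion hPD] at hsum1
    have hsum2 : ∑ i ∈ S, ∑ k ∈ F i, x k = ∑ i ∈ S, ((F i).card : ℝ) * x i :=
      Finset.sum_congr rfl (fun i _ => hFsum i)
    rw [hsum2, ← Finset.add_sum_erase _ _ hs] at hsum1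
    have hsum3 : ((F r).card : ℝ) * x s ≤ ∑ i ∈ S.erase s, ((F i).card : ℝ) * x i := by
      have hcone := hx.2 (Fin.last m) s hs
      rw [← hSdef] at hcone
      calc ((F r).card : ℝ) * x s ≤ ((F r).card : ℝ) * ∑ i ∈ S.erase s, x i := by
            apply mul_le_mul_of_nonneg_left hcone (Nat.cast_nonneg _)
        _ = ∑ i ∈ S.erase s, ((F r).card : ℝ) * x i := Finset.mul_sum _ _ _
        _ ≤ ∑ i ∈ S.erase s, ((F i).card : ℝ) * x i := by
            apply Finset.sum_le_sum
            intro i hi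
            exact mul_le_mul_of_nonneg_right (Nat.cast_le.2 (hrmin i hi)) (hx.1 i)
    calc (minDist C : ℝ) * x p ≤ (((F s).card : ℝ) + ((F r).card : ℝ)) * x p :=
          mul_le_mul_of_nonneg_right hd (le_of_lt hMpos)
      _ = ((F s).card : ℝ) * x s + ((F r).card : ℝ) * x s := by rw [hxs]; ring
      _ ≤ ((F s).card : ℝ) * x s + ∑ i ∈ S.erase s, ((F i).card : ℝ) * x i := by
          linarith [hsum3]
      _ ≤ ∑ i, x i := hsum1
  · -- class of p misses S
    push_neg at hcase
    set Pr : Fin n → Prop := fun i => R i p with hPr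
    have hinv : ∀ a b, step Hh a b → (Pr a ↔ Pr b) := by
      intro a b hab
      have h1 : R a b := Relation.ReflTransGen.single hab
      have h2 : R b a := Rsymm h1
      exact ⟨fun h => h2.trans h, fun h => h1.trans h⟩
    have hrow : (∑ i ∈ S, (if Pr i then (1 : ZMod 2) else 0)) = 0 := by
      apply Finset.sum_eq_zero
      intro i hi
      have : ¬ Pr i := fun h => absurd h (by exact hcase i hi)
      simp [this]
    have hd : (minDist C : ℝ) ≤ ((F p).card : ℝ) := by
      have := hDle Pr hinv hrow ⟨p, Relation.ReflTransGen.refl⟩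
      exact_mod_cast this
    calc (minDist C : ℝ) * x p ≤ ((F p).card : ℝ) * x p :=
          mul_le_mul_of_nonneg_right hd (le_of_lt hMpos)
      _ = ∑ i ∈ F p, x i := (hFsum p).symm
      _ ≤ ∑ i, x i :=
          Finset.sum_le_sum_of_subset_of_nonneg (Finset.subset_univ _) (fun i _ _ => hx.1 i)

end Cone

lemma minmax_step (ξ : ℝ) (i : ℕ) :
    min 1 (max 0 (ξ - i)) = min (max 0 ξ) (i + 1) - min (max 0 ξ) i := by
  have h0 : (0:ℝ) ≤ (i:ℝ) := Nat.cast_nonneg i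
  rcases le_total ξ (i:ℝ) with h|h <;> rcases le_total ξ ((i:ℝ)+1) with h2|h2 <;>
    rcases le_total ξ 0 with h3|h3 <;>
    simp [min_def, max_def] <;> split_ifs <;> linarith

lemma sum_minmax (ξ : ℝ) (d : ℕ) :
    ∑ k ∈ Finset.range d, min 1 (max 0 (ξ - (k : ℝ))) = min (max 0 ξ) (d : ℝ) := by
  rw [Finset.sum_congr rfl (fun k _ => minmax_step ξ k)]
  have := Finset.sum_range_sub (fun k : ℕ => min (max 0 ξ) (k : ℝ)) d
  push_cast at this ⊢
  rw [this]
  simp [min_eq_right (le_max_left 0 ξ)]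

lemma minmax_nonneg (ξ : ℝ) (i : ℕ) : 0 ≤ min 1 (max 0 (ξ - i)) :=
  le_min zero_le_one (le_max_left _ _)

lemma minmax_le_one (ξ : ℝ) (i : ℕ) : min 1 (max 0 (ξ - i)) ≤ 1 := min_le_left _ _

lemma bigPhi_le {x : Fin n → ℝ} {M : ℝ} (hM : ∀ i, x i ≤ M) (ξ : ℝ) :
    bigPhi x ξ ≤ M * min (max 0 ξ) (n : ℝ) := by
  unfold bigPhi sortDesc
  calc ∑ i : Fin n, x (Tuple.sort (fun j => -x j) i) * min 1 (max 0 (ξ - (i : ℝ)))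
      ≤ ∑ i : Fin n, M * min 1 (max 0 (ξ - (i : ℝ))) := by
        apply Finset.sum_le_sum
        intro i _
        exact mul_le_mul_of_nonneg_right (hM _) (minmax_nonneg _ _)
    _ = M * ∑ i : Fin n, min 1 (max 0 (ξ - (i : ℝ))) := by rw [Finset.mul_sum]
    _ = M * min (max 0 ξ) (n : ℝ) := by
        rw [Fin.sum_univ_eq_sum_range (fun k : ℕ => min 1 (max 0 (ξ - (k : ℝ)))) n,
          sum_minmax]

lemma bigPhi_at_n (x : Fin n → ℝ) : bigPhi x (n : ℝ) = ∑ i, x i := by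
  unfold bigPhi sortDesc
  have h1 : ∀ i : Fin n, min 1 (max 0 ((n : ℝ) - (i : ℝ))) = 1 := by
    intro i
    have hi : ((i : ℕ) : ℝ) + 1 ≤ (n : ℝ) := by exact_mod_cast i.is_lt
    rw [min_eq_left]
    exact le_max_of_le_right (by linarith)
  calc ∑ i : Fin n, x (Tuple.sort (fun j => -x j) i) * min 1 (max 0 ((n:ℝ) - (i : ℝ)))
      = ∑ i : Fin n, x (Tuple.sort (fun j => -x j) i) := by
        refine Finset.sum_congr rfl fun i _ => ?_
        rw [h1 i, mul_one]
    _ = ∑ i, x i := Equiv.sum_comp (Tuple.sort (fun j => -x j)) x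

lemma wBSC_lb {d : ℕ} {x : Fin n → ℝ} {p : Fin n}
    (hppos : 0 < x p) (hkey : (d : ℝ) * x p ≤ ∑ i, x i) (hspos : 0 < ∑ i, x i)
    (hM : ∀ i, x i ≤ x p) :
    (d : ℝ) ≤ wBSC x := by
  unfold wBSC
  have hΦn : bigPhi x (n : ℝ) = ∑ i, x i := bigPhi_at_n x
  have hlb : ∀ ξ ∈ {ξ : ℝ | bigPhi x (n : ℝ) / 2 ≤ bigPhi x ξ}, (d : ℝ) / 2 ≤ ξ := by
    intro ξ hξ
    rw [Set.mem_setOf_eq, hΦn] at hξ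
    have h2 : bigPhi x ξ ≤ x p * min (max 0 ξ) (n : ℝ) := bigPhi_le hM ξ
    have h3 : x p * min (max 0 ξ) (n : ℝ) ≤ x p * max 0 ξ :=
      mul_le_mul_of_nonneg_left (min_le_left _ _) hppos.le
    have h4 : 0 < max 0 ξ := by
      by_contra h
      push_neg at h
      have : x p * max 0 ξ ≤ 0 := mul_nonpos_of_nonneg_of_nonpos hppos.le h
      linarith
    have h5 : max 0 ξ = ξ := by
      rcases le_total ξ 0 with h | h
      · rw [max_eq_left h] at h4; linarith
      · exact max_eq_right h
    rw [h5] at h2 h3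
    have h6 : (d : ℝ) * x p ≤ 2 * ξ * x p := by nlinarith
    have := le_of_mul_le_mul_right (by linarith : (d : ℝ) * x p ≤ (2 * ξ) * x p) hppos
    linarith
  have hne : (n : ℝ) ∈ {ξ : ℝ | bigPhi x (n : ℝ) / 2 ≤ bigPhi x ξ} := by
    rw [Set.mem_setOf_eq]
    linarith
  have := le_csInf ⟨(n : ℝ), hne⟩ hlb
  linarith

lemma sortDesc_indicator {y : Fin n → ℝ} (h01 : ∀ i, y i = 0 ∨ y i = 1) (i : Fin n) :
    sortDesc y i =
      if (i : ℕ) < (univ.filter (fun k => y k = 1)).card then 1 else 0 := by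
  classical
  set σ := Tuple.sort (fun j => -y j) with hσ
  have hanti : ∀ a b : Fin n, a ≤ b → y (σ b) ≤ y (σ a) := by
    intro a b hab
    have := Tuple.monotone_sort (fun j => -y j) hab
    simp only [Function.comp_apply] at this
    linarith [this]
  set D := (univ.filter (fun k => y k = 1)).card with hD
  have hcardσ : (univ.filter (fun k => y (σ k) = 1)).card = D := by
    rw [hD]
    apply Finset.card_bij (fun a _ => σ a)
    · intro a ha
      simp only [Finset.mem_filter, Finset.mem_univ, true_and] at ha ⊢
      exact ha
    · intro a _ b _ hab
      exact σ.injective hab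
    · intro b hb
      refine ⟨σ.symm b, ?_, by simp⟩
      simp only [Finset.mem_filter, Finset.mem_univ, true_and] at hb ⊢
      simpa using hb
  show y (σ i) = if (i : ℕ) < D then 1 else 0
  split_ifs with h
  · by_contra hne
    have hzero : y (σ i) = 0 := (h01 (σ i)).resolve_right hne
    have hsub : (univ.filter (fun k => y (σ k) = 1)) ⊆ Finset.Iio i := by
      intro j hj
      simp only [Finset.mem_filter, Finset.mem_univ, true_and] at hj
      rw [Finset.mem_Iio]
      by_contra hge
      push_neg at hge
      have := hanti i j hge
      rw [hj, hzero] at this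
      linarith
    have := Finset.card_le_card hsub
    rw [hcardσ] at this
    have hIio : (Finset.Iio i).card = (i : ℕ) := by simp
    omega
  · by_contra hne
    have hone : y (σ i) = 1 := (h01 (σ i)).resolve_left hne
    have hsub : Finset.Iic i ⊆ (univ.filter (fun k => y (σ k) = 1)) := by
      intro j hj
      rw [Finset.mem_Iic] at hj
      simp only [Finset.mem_filter, Finset.mem_univ, true_and]
      have h1 := hanti j i hj
      rw [hone] at h1
      rcases h01 (σ j) with h2 | h2
      · rw [h2] at h1; linarith
      · exact h2
    have := Finset.card_le_card hsub
    rw [hcardσ] at this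
    have hIic : (Finset.Iic i).card = (i : ℕ) + 1 := by simp
    omega

lemma bigPhi_indicator {y : Fin n → ℝ} (h01 : ∀ i, y i = 0 ∨ y i = 1) (ξ : ℝ) :
    bigPhi y ξ = min (max 0 ξ) ((univ.filter (fun k => y k = 1)).card : ℝ) := by
  classical
  set D := (univ.filter (fun k => y k = 1)).card with hD
  have hDn : D ≤ n := le_trans (Finset.card_filter_le _ _) (by simp)
  unfold bigPhi
  have h1 : ∀ i : Fin n, sortDesc y i * min 1 (max 0 (ξ - (i : ℝ))) =
      (fun k : ℕ => if k < D then min 1 (max 0 (ξ - (k : ℝ))) else 0) (i : ℕ) := by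
    intro i
    rw [sortDesc_indicator h01 i, ← hD]
    by_cases h : (i:ℕ) < D
    · rw [if_pos h]; simp only [if_pos h]; rw [one_mul]
    · rw [if_neg h]; simp only [if_neg h]; rw [zero_mul]
  rw [Finset.sum_congr rfl (fun i _ => h1 i),
    Fin.sum_univ_eq_sum_range (fun k : ℕ => if k < D then min 1 (max 0 (ξ - (k : ℝ))) else 0) n]
  rw [← Finset.sum_subset (Finset.range_subset_range.2 hDn)
    (fun k _ hk => if_neg (by simp only [Finset.mem_range] at hk ⊢; omega))]
  rw [Finset.sum_congr rfl (fun k hk => if_pos (Finset.mem_range.1 hk)), sum_minmax]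

lemma wBSC_indicator_le {y : Fin n → ℝ} (h01 : ∀ i, y i = 0 ∨ y i = 1)
    (hDpos : 0 < (univ.filter (fun k => y k = 1)).card) :
    wBSC y ≤ ((univ.filter (fun k => y k = 1)).card : ℝ) := by
  classical
  set D := (univ.filter (fun k => y k = 1)).card with hD
  have hDn : D ≤ n := le_trans (Finset.card_filter_le _ _) (by simp)
  have hDR : (0:ℝ) < D := by exact_mod_cast hDpos
  unfold wBSC
  have hΦ : ∀ ξ : ℝ, bigPhi y ξ = min (max 0 ξ) (D : ℝ) := bigPhi_indicator h01
  have hΦn : bigPhi y (n : ℝ) = (D : ℝ) := by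
    rw [hΦ, max_eq_right (Nat.cast_nonneg n), min_eq_right (by exact_mod_cast hDn)]
  have hmem : (D : ℝ) / 2 ∈ {ξ : ℝ | bigPhi y (n : ℝ) / 2 ≤ bigPhi y ξ} := by
    rw [Set.mem_setOf_eq, hΦn, hΦ, max_eq_right (by linarith), min_eq_left (by linarith)]
  have hbdd : BddBelow {ξ : ℝ | bigPhi y (n : ℝ) / 2 ≤ bigPhi y ξ} := by
    refine ⟨0, fun ξ hξ => ?_⟩
    rw [Set.mem_setOf_eq, hΦn, hΦ] at hξ
    by_contra h
    push_neg at h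
    rw [max_eq_left h.le, min_eq_left (by linarith)] at hξ
    linarith
  have := csInf_le hbdd hmem
  linarith

lemma zmod2_ne_zero_iff (a : ZMod 2) : a ≠ 0 ↔ a = 1 := by revert a; decide

section Main

variable {H : Matrix (Fin (m + 1)) (Fin n) (ZMod 2)}

lemma indicator_real_mem_cone {C : Submodule (ZMod 2) (Fin n → ZMod 2)}
    (hH : IsParityCheck H C) {c : Fin n → ZMod 2} (hc : c ∈ C) :
    (fun i => if c i = 1 then (1 : ℝ) else 0) ∈ fundCone H := by
  classical
  constructor
  · intro i; dsimp only; split_ifs <;> norm_num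
  · intro j ℓ hℓ
    dsimp only
    by_cases hcl : c ℓ = 1
    · have hsum : ∑ i ∈ rowSupp H j, c i = 0 := by
        have h0 := congrFun ((hH c).1 hc) j
        rw [mulVec_eq] at h0
        simpa using h0
      rw [← Finset.add_sum_erase _ _ hℓ, hcl] at hsum
      have h1 : ∑ i ∈ (rowSupp H j).erase ℓ, c i = 1 := by
        rcases zmod2_cases (∑ i ∈ (rowSupp H j).erase ℓ, c i) with h | h
        · rw [h] at hsum; exact absurd hsum (by decide)
        · exact h
      have h2 : ∃ i ∈ (rowSupp H j).erase ℓ, c i ≠ 0 := by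
        by_contra hall
        push_neg at hall
        rw [Finset.sum_eq_zero (fun i hi => hall i hi)] at h1
        exact absurd h1 (by decide)
      obtain ⟨i0, hi0, hi0ne⟩ := h2
      have hci0 : c i0 = 1 := (zmod2_ne_zero_iff _).1 hi0ne
      calc (if c ℓ = 1 then (1 : ℝ) else 0) = 1 := if_pos hcl
        _ = (if c i0 = 1 then (1 : ℝ) else 0) := by rw [if_pos hci0]
        _ ≤ ∑ i ∈ (rowSupp H j).erase ℓ, (if c i = 1 then (1 : ℝ) else 0) :=
          Finset.single_le_sum (f := fun i => if c i = 1 then (1:ℝ) else 0)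
            (fun i _ => by split_ifs <;> norm_num) hi0
    · rw [if_neg hcl]
      exact Finset.sum_nonneg fun i _ => by split_ifs <;> norm_num

lemma card_filter_eq_hammingNorm (c : Fin n → ZMod 2) :
    (univ.filter (fun i => c i = 1)).card = hammingNorm c := by
  unfold hammingNorm
  congr 1
  exact Finset.filter_congr fun i _ => (zmod2_ne_zero_iff _).symm

end Main

end S7

/-- Let `H` be a parity-check matrix of the nonzero binary linear code `C`
whose first rows (all but the last) have Hamming weight exactly 2; let `Ĥ` consist of these
rows and `R` be its associated chain equivalence relation. If the support of the last row of
`H` intersects each equivalence class of `R` in at most one element, then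
`d(C) = w_AWGNC^min(H) = w_BSC^min(H) = w_maxfrac^min(H)`. -/
theorem statement7 {m n : ℕ} (C : Submodule (ZMod 2) (Fin n → ZMod 2)) (hC : C ≠ ⊥)
    (H : Matrix (Fin (m + 1)) (Fin n) (ZMod 2)) (hH : IsParityCheck H C)
    (Hhat : Matrix (Fin m) (Fin n) (ZMod 2))
    (hHhat : Hhat = Matrix.of fun j i => H j.castSucc i)
    (hrows : ∀ j, (rowSupp Hhat j).card = 2)
    (hlast : ∀ i ∈ rowSupp H (Fin.last m), ∀ i' ∈ rowSupp H (Fin.last m),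
      chainRel Hhat i i' → i = i') :
    ((minDist C : ℝ) : EReal) = minPW wAWGNC H ∧
    ((minDist C : ℝ) : EReal) = minPW wBSC H ∧
    ((minDist C : ℝ) : EReal) = minPW wMaxFrac H := by
  classical
  have hne : {k | ∃ c ∈ C, c ≠ 0 ∧ hammingNorm c = k}.Nonempty := by
    obtain ⟨c, hcC, hc0⟩ := (Submodule.ne_bot_iff C).1 hC
    exact ⟨hammingNorm c, c, hcC, hc0, rfl⟩
  obtain ⟨c0, hc0C, hc0ne, hc0norm⟩ : ∃ c ∈ C, c ≠ 0 ∧ hammingNorm c = minDist C :=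
    Nat.sInf_mem hne
  set d := minDist C with hd
  have hdpos : 0 < d := by
    rcases Nat.eq_zero_or_pos d with h | h
    · exact absurd (hammingNorm_eq_zero.1 (hc0norm.trans h)) hc0ne
    · exact h
  have hdR : (0 : ℝ) < (d : ℝ) := by exact_mod_cast hdpos
  set y : Fin n → ℝ := fun i => if c0 i = 1 then 1 else 0 with hy
  have hycone : y ∈ fundCone H := S7.indicator_real_mem_cone hH hc0C
  have hDcard : (univ.filter (fun i => y i = 1)).card = d := by
    have heq : ∀ i ∈ univ, (y i = 1 ↔ c0 i = 1) := by
      intro i _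
      rw [hy]
      dsimp only
      split_ifs with h <;> simp [h]
    rw [Finset.filter_congr heq, S7.card_filter_eq_hammingNorm, hc0norm]
  have h01 : ∀ i, y i = 0 ∨ y i = 1 := by
    intro i; rw [hy]; dsimp only; split_ifs <;> simp
  have hysum : ∑ i, y i = (d : ℝ) := by
    rw [hy]
    rw [Finset.sum_boole, S7.card_filter_eq_hammingNorm, hc0norm]
  have hyne : y ≠ 0 := by
    obtain ⟨i, hi⟩ := Function.ne_iff.1 hc0ne
    have : y i = 1 := by rw [hy]; exact if_pos ((S7.zmod2_ne_zero_iff _).1 hi)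
    intro hcontra
    rw [hcontra] at this
    simpa using this
  have hysq : ∑ i, y i ^ 2 = (d : ℝ) := by
    have : ∀ i ∈ univ, y i ^ 2 = y i := by
      intro i _
      rcases h01 i with h | h <;> rw [h] <;> norm_num
    rw [Finset.sum_congr rfl this, hysum]
  have hysup : sSup (Set.range y) = 1 := by
    obtain ⟨i, hi⟩ := Function.ne_iff.1 hc0ne
    have hyi : y i = 1 := by rw [hy]; exact if_pos ((S7.zmod2_ne_zero_iff _).1 hi)
    apply IsGreatest.csSup_eq
    constructor
    · exact ⟨i, hyi⟩
    · rintro _ ⟨k, rfl⟩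
      rcases h01 k with h | h <;> rw [h] <;> norm_num
  have hAW_y : wAWGNC y = (d : ℝ) := by
    unfold wAWGNC
    rw [hysum, hysq, sq, mul_div_assoc, div_self (ne_of_gt hdR), mul_one]
  have hMF_y : wMaxFrac y = (d : ℝ) := by
    unfold wMaxFrac
    rw [hysum, hysup, div_one]
  have hBSC_y : wBSC y ≤ (d : ℝ) := by
    have := S7.wBSC_indicator_le h01 (by rw [hDcard]; exact hdpos)
    rwa [hDcard] at this
  have hnpos : 0 < n := by
    obtain ⟨i, _⟩ := Function.ne_iff.1 hc0ne
    exact i.pos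
  -- structure of nonzero pseudocodewords
  have hkeyx : ∀ x ∈ fundCone H, x ≠ 0 → ∃ p : Fin n, (∀ i, x i ≤ x p) ∧ 0 < x p ∧
      (d : ℝ) * x p ≤ ∑ i, x i ∧ 0 < ∑ i, x i := by
    intro x hx hx0
    obtain ⟨p, _, hp⟩ := Finset.exists_max_image univ x ⟨⟨0, hnpos⟩, Finset.mem_univ _⟩
    have hp' : ∀ i, x i ≤ x p := fun i => hp i (Finset.mem_univ i)
    have hppos : 0 < x p := by
      obtain ⟨i, hi⟩ := Function.ne_iff.1 hx0
      exact lt_of_lt_of_le (lt_of_le_of_ne (hx.1 i) (Ne.symm hi)) (hp' i)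
    have hkey := S7.key_lb hH hHhat hrows hlast hx hx0 hp'
    have hs : 0 < ∑ i, x i :=
      lt_of_lt_of_le hppos (Finset.single_le_sum (fun i _ => hx.1 i) (Finset.mem_univ p))
    exact ⟨p, hp', hppos, hkey, hs⟩
  have hAW_lb : ∀ x ∈ fundCone H, x ≠ 0 → (d : ℝ) ≤ wAWGNC x := by
    intro x hx hx0
    obtain ⟨p, hp', hppos, hkey, hs⟩ := hkeyx x hx hx0
    unfold wAWGNC
    have hsq : 0 < ∑ i, x i ^ 2 :=
      lt_of_lt_of_le (pow_pos hppos 2)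
        (Finset.single_le_sum (fun i _ => sq_nonneg (x i)) (Finset.mem_univ p))
    rw [le_div_iff₀ hsq]
    have h1 : ∑ i, x i ^ 2 ≤ x p * ∑ i, x i := by
      rw [Finset.mul_sum]
      apply Finset.sum_le_sum
      intro i _
      rw [sq]
      exact mul_le_mul_of_nonneg_right (hp' i) (hx.1 i)
    calc (d : ℝ) * ∑ i, x i ^ 2 ≤ (d : ℝ) * (x p * ∑ i, x i) :=
          mul_le_mul_of_nonneg_left h1 (Nat.cast_nonneg d)
      _ = ((d : ℝ) * x p) * ∑ i, x i := by ring
      _ ≤ (∑ i, x i) * (∑ i, x i) := mul_le_mul_of_nonneg_right hkey hs.le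
      _ = (∑ i, x i) ^ 2 := (sq _).symm
  have hMF_lb : ∀ x ∈ fundCone H, x ≠ 0 → (d : ℝ) ≤ wMaxFrac x := by
    intro x hx hx0
    obtain ⟨p, hp', hppos, hkey, _⟩ := hkeyx x hx hx0
    unfold wMaxFrac
    have hsup : sSup (Set.range x) = x p := by
      apply IsGreatest.csSup_eq
      exact ⟨⟨p, rfl⟩, by rintro _ ⟨i, rfl⟩; exact hp' i⟩
    rw [hsup, le_div_iff₀ hppos]
    exact hkey
  have hBSC_lb : ∀ x ∈ fundCone H, x ≠ 0 → (d : ℝ) ≤ wBSC x := by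
    intro x hx hx0
    obtain ⟨p, hp', hppos, hkey, hs⟩ := hkeyx x hx hx0
    exact S7.wBSC_lb hppos hkey hs hp'
  have main : ∀ (w : (Fin n → ℝ) → ℝ), (∀ x ∈ fundCone H, x ≠ 0 → (d : ℝ) ≤ w x) →
      w y ≤ (d : ℝ) → ((d : ℝ) : EReal) = minPW w H := by
    intro w hlb hub
    apply le_antisymm
    · apply le_sInf
      rintro b ⟨x, ⟨hxc, hx0⟩, rfl⟩
      exact EReal.coe_le_coe_iff.2 (hlb x hxc (by simpa using hx0))
    · refine le_trans (sInf_le ⟨y, ⟨hycone, ?_⟩, rfl⟩) (EReal.coe_le_coe_iff.2 hub)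
      simpa using hyne
  exact ⟨main _ hAW_lb (le_of_eq hAW_y), main _ hBSC_lb hBSC_y, main _ hMF_lb (le_of_eq hMF_y)⟩
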